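/- Let v_L > 0, y_L < 0, y_L² > 4v_L, R_L = √(y_L²−4v_L), and let v > v_L with y = v(y_L + R_L)/(2v_L) + (y_L − R_L)/2 (a point on the 2-shock curve S₂ through (v_L, y_L)) satisfying y² > 4v. Then the 2-shock speed s₂ = (−y_L + R_L)/(2v·v_L) satisfies the Lax admissibility inequalities λ₂(v_L, y_L) > s₂ > λ₂(v, y), where λ₂(v,y) = (−y + √(y²−4v))/(2v²). -/

import Mathlib

/-- Second characteristic speed. -/
noncomputable def lam2 (v y : ℝ) : ℝ := (-y + Real.sqrt (y ^ 2 - 4 * v)) / (2 * v ^ 2)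

theorem stmt9 (vL yL v y RL : ℝ)
    (hvL : 0 < vL) (hyL : yL < 0) (hL : yL ^ 2 > 4 * vL)
    (hRL : RL = Real.sqrt (yL ^ 2 - 4 * vL))
    (hv : vL < v)
    (hy : y = v * (yL + RL) / (2 * vL) + (yL - RL) / 2)
    (hhyp : y ^ 2 > 4 * v) :
    lam2 vL yL > (-yL + RL) / (2 * v * vL) ∧
    (-yL + RL) / (2 * v * vL) > lam2 v y := by
  have h4 : 0 < yL ^ 2 - 4 * vL := by linarith
  have hRLpos : 0 < RL := by rw [hRL]; exact Real.sqrt_pos.mpr h4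
  have hRLsq : RL ^ 2 = yL ^ 2 - 4 * vL := by
    rw [hRL, sq, Real.mul_self_sqrt h4.le]
  have hd : 0 < RL - yL := by linarith
  have hM : RL + yL < 0 := by nlinarith
  have hv0 : 0 < v := lt_trans hvL hv
  set D : ℝ := v * (yL + RL) - vL * (yL - RL) with hD
  have key : y ^ 2 - 4 * v = (D / (2 * vL)) ^ 2 := by
    rw [hy, hD]
    field_simp
    ring_nf
    linarith [(show v * vL ^ 3 * (RL ^ 2 - (yL ^ 2 - 4 * vL)) = 0 from by
      rw [hRLsq]; ring), (show v * vL * (RL ^ 2 - (yL ^ 2 - 4 * vL)) = 0 from by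
      rw [hRLsq]; ring)]
  have hsqrt : Real.sqrt (y ^ 2 - 4 * v) = |D| / (2 * vL) := by
    rw [key, Real.sqrt_sq_eq_abs, abs_div, abs_of_pos (by linarith : (0:ℝ) < 2 * vL)]
  have hDne : D ≠ 0 := by
    intro h
    have h0 : 0 < (D / (2 * vL)) ^ 2 := by rw [← key]; linarith
    rw [h] at h0; simp at h0
  refine ⟨?_, ?_⟩
  · rw [lam2, ← hRL]
    rw [gt_iff_lt, div_lt_div_iff₀ (by positivity) (by positivity)]
    nlinarith [mul_pos (show (0:ℝ) < -yL + RL by linarith) (show (0:ℝ) < v - vL by linarith)]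
  · rw [lam2, hsqrt, gt_iff_lt, div_lt_div_iff₀ (by positivity) (by positivity)]
    rcases hDne.lt_or_gt with hneg | hpos
    · rw [abs_of_neg hneg]
      have hLHS : (-y + -D / (2 * vL)) * (2 * v * vL) = -2 * v ^ 2 * (yL + RL) := by
        rw [hy, hD]; field_simp; ring
      rw [hLHS]
      nlinarith [mul_pos (mul_pos hv0 hv0) hRLpos]
    · rw [abs_of_pos hpos]
      have hLHS : (-y + D / (2 * vL)) * (2 * v * vL) = -2 * v * vL * (yL - RL) := by
        rw [hy, hD]; field_simp; ring
      rw [hLHS]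
      nlinarith [mul_pos (mul_pos hv0 (show (0:ℝ) < v - vL by linarith)) hd]
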